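/- For (r, r′) ∈ ℂ², one has t¹(r, r′)(α, α′) = 0 for all α, α′ ∈ ℕ if and only if (r, r′) ∈ L_even. -/
import Mathlib


noncomputable section

/-- ρ = (n-1)/2 as a complex number. -/
def rho (n : ℕ) : ℂ := ((n : ℂ) - 1) / 2

/-- ρ' = (n-2)/2 as a complex number. -/
def rho' (n : ℕ) : ℂ := ((n : ℂ) - 2) / 2

/-- A diagonal sequence for `(r, r')`. -/
def IsDiagSeq (n : ℕ) (r r' : ℂ) (s : ℕ → ℂ) : Prop :=
  ∀ α : ℕ, (2*r' + 2*(α : ℂ) + (n : ℂ) - 2) * s α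
    = (2*r + 2*(α : ℂ) + (n : ℂ) - 1) * s (α + 1)

/-- L_even. -/
def Leven (n : ℕ) : Set (ℂ × ℂ) :=
  {p | ∃ i j : ℕ, p.1 = -rho n - (i : ℂ) ∧ p.2 = -rho' n - (j : ℂ) ∧ ∃ k : ℕ, i = j + 2*k}

/-- L_odd. -/
def Lodd (n : ℕ) : Set (ℂ × ℂ) :=
  {p | ∃ i j : ℕ, p.1 = -rho n - (i : ℂ) ∧ p.2 = -rho' n - (j : ℂ) ∧ ∃ k : ℕ, i = j + 2*k + 1}

/-- An admissible solution `t : ℕ × ℕ → ℂ` for `(r, r')`: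
`t(α,α') = 0` when `α' > α` or `α − α'` is odd (equivalently `α + α'` is odd),
and the relations (R1), (R2) hold for all `α ≥ α'` with `α − α'` even.
The natural-subtraction index `α - 1` is harmless, since in (R1) its coefficient
`(α − α')` vanishes when `α = α'`, and in (R2) we have `α ≥ α' ≥ 1`. -/
def IsAdmissible (n : ℕ) (r r' : ℂ) (t : ℕ → ℕ → ℂ) : Prop :=
  (∀ α α' : ℕ, (α < α' ∨ Odd (α + α')) → t α α' = 0) ∧
  (∀ α α' : ℕ, α' ≤ α → Even (α + α') →
    ((2*(α : ℂ) + (n : ℂ) - 2) * (2*r' + 2*(α' : ℂ) + (n : ℂ) - 2) * t α α'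
      = ((α : ℂ) + (α' : ℂ) + (n : ℂ) - 2) * (2*r + 2*(α : ℂ) + (n : ℂ) - 1)
          * t (α + 1) (α' + 1)
        + ((α : ℂ) - (α' : ℂ)) * (2*r - 2*(α : ℂ) - (n : ℂ) + 3)
          * t (α - 1) (α' + 1)) ∧
    (1 ≤ α' →
      (2*(α : ℂ) + (n : ℂ) - 2) * (2*r' - 2*(α' : ℂ) - (n : ℂ) + 4) * t α α'
      = ((α : ℂ) - (α' : ℂ) + 1) * (2*r + 2*(α : ℂ) + (n : ℂ) - 1)
          * t (α + 1) (α' - 1)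
        + ((α : ℂ) + (α' : ℂ) + (n : ℂ) - 3) * (2*r - 2*(α : ℂ) - (n : ℂ) + 3)
          * t (α - 1) (α' - 1)))

/-- The spectral function `t¹(r,r')` of Corollary 4.12 (1):
`t¹(r,r')(α,α') = (r'+ρ')_{α'} · Σ_{k=0}^{(α−α')/2} 2^{4k} ((α+α'+n−2)/2)_k (−(α−α')/2)_k
((2r+2r'+1)/4)_k ((2r−2r'+1)/4)_k / (2k)! · (1/Γ(r+ρ+α'+2k))`
for `α' ≤ α` with `α − α'` even, and `0` otherwise. -/
def t1 (n : ℕ) (r r' : ℂ) (α α' : ℕ) : ℂ :=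
  if α < α' ∨ Odd (α + α') then 0
  else (ascPochhammer ℂ α').eval (r' + rho' n) *
    ∑ k ∈ Finset.range ((α - α') / 2 + 1),
      (2 : ℂ)^(4*k) * (ascPochhammer ℂ k).eval (((α : ℂ) + (α' : ℂ) + (n : ℂ) - 2)/2) *
        (ascPochhammer ℂ k).eval (-(((α : ℂ) - (α' : ℂ))/2)) *
        (ascPochhammer ℂ k).eval ((2*r + 2*r' + 1)/4) *
        (ascPochhammer ℂ k).eval ((2*r - 2*r' + 1)/4) / ((2*k).factorial : ℂ) *
        (Complex.Gamma (r + rho n + (α' : ℂ) + 2*(k : ℂ)))⁻¹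

lemma t1_diag (n : ℕ) (r r' : ℂ) (α : ℕ) : t1 n r r' α α
    = (ascPochhammer ℂ α).eval (r' + rho' n) * (Complex.Gamma (r + rho n + α))⁻¹ := by
  unfold t1
  rw [if_neg (by push_neg; exact ⟨le_refl _, Nat.not_odd_iff_even.2 ⟨α, rfl⟩⟩)]
  simp [Nat.sub_self, Finset.sum_range_one]

lemma t1_vanish (n : ℕ) (i j m : ℕ) (hij : i = j + 2*m) (α α' : ℕ) :
    t1 n (-rho n - i) (-rho' n - j) α α' = 0 := by
  unfold t1
  split
  · rfl
  rename_i h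
  push_neg at h
  obtain ⟨hle, _⟩ := h
  rcases lt_or_ge j α' with hj | hj
  · -- Pochhammer factor vanishes
    have : (ascPochhammer ℂ α').eval (-rho' n - j + rho' n) = 0 := by
      rw [ascPochhammer_eval_eq_zero_iff]
      exact ⟨j, hj, by push_cast; ring⟩
    rw [this, zero_mul]
  · -- each summand vanishes
    rw [Finset.sum_eq_zero, mul_zero]
    intro k _
    rcases le_or_gt k m with hk | hk
    · -- Gamma inverse vanishes
      have harg : -rho n - i + rho n + (α' : ℂ) + 2*(k : ℂ) = -((i - α' - 2*k : ℕ) : ℂ) := by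
        have : α' + 2*k ≤ i := by omega
        push_cast [Nat.cast_sub (by omega : 2*k ≤ i - α'), Nat.cast_sub (by omega : α' ≤ i)]
        ring
      rw [harg, Complex.Gamma_neg_nat_eq_zero, inv_zero, mul_zero]
    · -- fourth Pochhammer vanishes
      have : (ascPochhammer ℂ k).eval ((2*(-rho n - i) - 2*(-rho' n - j) + 1)/4) = 0 := by
        rw [ascPochhammer_eval_eq_zero_iff]
        refine ⟨m, hk, ?_⟩
        rw [rho, rho']
        push_cast [hij]
        ring
      rw [this]
      ring

lemma t1_parity (n : ℕ) (hn : 3 ≤ n) (i j m : ℕ) (hij : i = j + 2*m + 1) :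
    t1 n (-rho n - i) (-rho' n - j) (j + 2*m + 2) j ≠ 0 := by
  unfold t1
  rw [if_neg (by
    push_neg
    exact ⟨by omega, Nat.not_odd_iff_even.2 ⟨j + m + 1, by ring⟩⟩)]
  apply mul_ne_zero
  · -- Pochhammer front factor (-j)_j ≠ 0
    rw [Ne, ascPochhammer_eval_eq_zero_iff]
    rintro ⟨k, hk, hke⟩
    have : (k : ℂ) = (j : ℂ) := by linear_combination hke
    have : k = j := by exact_mod_cast this
    omega
  · rw [show (j + 2*m + 2 - j)/2 + 1 = m + 2 by omega]
    rw [Finset.sum_eq_single_of_mem (m+1) (Finset.mem_range.2 (by omega))]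
    · -- the surviving term is nonzero
      apply mul_ne_zero
      apply div_ne_zero
      apply mul_ne_zero
      apply mul_ne_zero
      apply mul_ne_zero
      apply mul_ne_zero
      · exact pow_ne_zero _ two_ne_zero
      · -- P1
        rw [Ne, ascPochhammer_eval_eq_zero_iff]
        rintro ⟨k, hk, hke⟩
        have key : ((2*k + 2*j + 2*m + n : ℕ) : ℂ) = ((0 : ℕ) : ℂ) := by
          push_cast [hij] at hke ⊢
          linear_combination 2*hke
        have := Nat.cast_inj (R := ℂ) |>.mp key
        omega
      · -- P2
        rw [Ne, ascPochhammer_eval_eq_zero_iff]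
        rintro ⟨k, hk, hke⟩
        have key : ((k : ℕ) : ℂ) = ((m + 1 : ℕ) : ℂ) := by
          push_cast [hij] at hke ⊢
          linear_combination hke
        have := Nat.cast_inj (R := ℂ) |>.mp key
        omega
      · -- P3
        rw [Ne, ascPochhammer_eval_eq_zero_iff]
        rintro ⟨k, hk, hke⟩
        rw [rho, rho'] at hke
        have key : ((2*k + 2 : ℕ) : ℂ) = ((n + i + j : ℕ) : ℂ) := by
          push_cast [hij] at hke ⊢
          linear_combination 2*hke
        have := Nat.cast_inj (R := ℂ) |>.mp key
        omega
      · -- P4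
        rw [Ne, ascPochhammer_eval_eq_zero_iff]
        rintro ⟨k, hk, hke⟩
        rw [rho, rho'] at hke
        have key : ((2*k : ℕ) : ℂ) = ((2*m + 1 : ℕ) : ℂ) := by
          push_cast [hij] at hke ⊢
          linear_combination 2*hke
        have := Nat.cast_inj (R := ℂ) |>.mp key
        omega
      · exact Nat.cast_ne_zero.2 (Nat.factorial_ne_zero _)
      · -- Gamma(1)⁻¹ = 1 ≠ 0
        rw [show -rho n - (i:ℂ) + rho n + (j:ℕ) + 2*((m+1 : ℕ):ℂ) = 1 by
          push_cast [hij]; ring]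
        rw [Complex.Gamma_one]
        norm_num
    · -- other terms vanish
      intro k hk hkne
      have hkm : k ≤ m := by
        have := Finset.mem_range.1 hk
        omega
      have harg : -rho n - (i:ℂ) + rho n + (j:ℕ) + 2*(k:ℂ)
          = -((2*m + 1 - 2*k : ℕ) : ℂ) := by
        push_cast [Nat.cast_sub (by omega : 2*k ≤ 2*m + 1), hij]
        ring
      rw [harg, Complex.Gamma_neg_nat_eq_zero, inv_zero, mul_zero]

theorem statement8 (n : ℕ) (hn : 3 ≤ n) (r r' : ℂ) :
    (∀ α α' : ℕ, t1 n r r' α α' = 0) ↔ (r, r') ∈ Leven n := by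
  constructor
  · intro h
    -- Step 1: Γ(r+ρ)⁻¹ = 0 gives r = -ρ - i
    have hd0 := h 0 0
    rw [t1_diag] at hd0
    simp only [ascPochhammer_zero, Polynomial.eval_one, one_mul, Nat.cast_zero, add_zero,
      inv_eq_zero] at hd0
    rw [Complex.Gamma_eq_zero_iff] at hd0
    obtain ⟨i, hi⟩ := hd0
    -- Step 2: (r'+ρ')_{i+1} = 0 gives r' = -ρ' - j with j ≤ i
    have hd1 := h (i+1) (i+1)
    rw [t1_diag, show r + rho n + ((i+1 : ℕ) : ℂ) = 1 by push_cast; linear_combination hi,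
      Complex.Gamma_one, inv_one, mul_one, ascPochhammer_eval_eq_zero_iff] at hd1
    obtain ⟨j, hj, hje⟩ := hd1
    have hr : r = -rho n - i := by linear_combination hi
    have hr' : r' = -rho' n - j := by linear_combination hje
    -- Step 3: parity
    rcases Nat.even_or_odd (i - j) with ⟨m, hm⟩ | ⟨m, hm⟩
    · exact ⟨i, j, hr, hr', m, by omega⟩
    · exfalso
      rw [hr, hr'] at h
      exact t1_parity n hn i j m (by omega) (h (j + 2*m + 2) j)
  · rintro ⟨i, j, hr, hr', m, hm⟩
    have hr2 : r = -rho n - i := hr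
    have hr'2 : r' = -rho' n - j := hr'
    intro α α'
    rw [hr2, hr'2]
    exact t1_vanish n i j m hm α α'

end
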